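/- First-order system for the half-angle variables: let (χ, a, f, Q) be a solution of system (10) on (0,∞) with ε = 1 and Q(ρ) > 0 for all ρ > 0, and define U(ρ) = √(Q(ρ)) cos(χ(ρ)/2) and V(ρ) = √(Q(ρ)) sin(χ(ρ)/2). Then U and V are differentiable on (0,∞) and satisfy dU/dρ = −(1/2)(a + 2)V and dV/dρ = (1/2)aU. -/

import Mathlib

open Real Filter Topology Set

/-- First-order system for the half-angle variables: for a solution
`(χ, a, f, Q)` of system (10) on `(0,∞)` with `ε = 1` and `Q > 0` on `(0,∞)`, the
functions `U = √Q cos(χ/2)` and `V = √Q sin(χ/2)` are differentiable on `(0,∞)`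
and satisfy `dU/dρ = −(1/2)(a + 2)V` and `dV/dρ = (1/2) a U`. -/
theorem half_angle_first_order_system
    (χ a f Q : ℝ → ℝ)
    (hχ : ∀ ρ > (0:ℝ), HasDerivAt χ (a ρ + 1 - Real.cos (χ ρ)) ρ)
    (ha : ∀ ρ > (0:ℝ), HasDerivAt a (-(1:ℝ) * f ρ / ρ ^ 2) ρ)
    (hf : ∀ ρ > (0:ℝ), HasDerivAt f (Q ρ) ρ)
    (hQ : ∀ ρ > (0:ℝ), HasDerivAt Q (-Q ρ * Real.sin (χ ρ)) ρ)
    (hQpos : ∀ ρ > (0:ℝ), 0 < Q ρ) :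
    ∀ ρ > (0:ℝ),
      HasDerivAt (fun σ => Real.sqrt (Q σ) * Real.cos (χ σ / 2))
        (-(1 / 2) * (a ρ + 2) * (Real.sqrt (Q ρ) * Real.sin (χ ρ / 2))) ρ ∧
      HasDerivAt (fun σ => Real.sqrt (Q σ) * Real.sin (χ σ / 2))
        ((1 / 2) * a ρ * (Real.sqrt (Q ρ) * Real.cos (χ ρ / 2))) ρ := by
  intro ρ hρ
  have hQp := hQpos ρ hρ
  have hQne : Q ρ ≠ 0 := ne_of_gt hQp
  have hsq : Real.sqrt (Q ρ) ^ 2 = Q ρ := Real.sq_sqrt hQp.le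
  have hsqpos : 0 < Real.sqrt (Q ρ) := Real.sqrt_pos.mpr hQp
  have hsqne : Real.sqrt (Q ρ) ≠ 0 := ne_of_gt hsqpos
  have hsqrt : HasDerivAt (fun σ => Real.sqrt (Q σ))
      (-Q ρ * Real.sin (χ ρ) / (2 * Real.sqrt (Q ρ))) ρ := (hQ ρ hρ).sqrt hQne
  have hhalf : HasDerivAt (fun σ => χ σ / 2) ((a ρ + 1 - Real.cos (χ ρ)) / 2) ρ :=
    (hχ ρ hρ).div_const 2
  set s := Real.sin (χ ρ / 2) with hs
  set c := Real.cos (χ ρ / 2) with hc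
  have hdouble : χ ρ = 2 * (χ ρ / 2) := by ring
  have hsin : Real.sin (χ ρ) = 2 * s * c := by
    rw [hdouble, Real.sin_two_mul]
  have hcos : Real.cos (χ ρ) = 2 * c ^ 2 - 1 := by
    rw [hdouble, Real.cos_two_mul]
  have hpy : s ^ 2 + c ^ 2 = 1 := Real.sin_sq_add_cos_sq (χ ρ / 2)
  have key : -Q ρ * Real.sin (χ ρ) / (2 * Real.sqrt (Q ρ)) = -(Real.sqrt (Q ρ) * s * c) := by
    rw [hsin]
    field_simp
    linear_combination (s * c) * hsq
  constructor
  · have h := hsqrt.mul (hhalf.cos)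
    rw [key] at h
    refine h.congr_deriv ?_
    simp only [← hs, ← hc]
    rw [hcos]
    ring
  · have h := hsqrt.mul (hhalf.sin)
    rw [key] at h
    refine h.congr_deriv ?_
    simp only [← hs, ← hc]
    rw [hcos]
    linear_combination (-(Real.sqrt (Q ρ) * c)) * hpy
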